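/- Let A and B be n×n Hermitian positive semidefinite complex matrices with B positive definite, and let ρ > 0. Then det(I + ρ·λ_min(B)·A) ≤ det(I + ρ·A·B) ≤ det(I + ρ·λ_max(B)·A), where λ_min(B) and λ_max(B) are the smallest and largest eigenvalues of B. -/

import Mathlib

open Matrix
open scoped ComplexOrder

namespace Stmt6Aux

variable {n : ℕ}

lemma smul_psd {M : Matrix (Fin n) (Fin n) ℂ} (hM : M.PosSemidef) {r : ℝ} (hr : 0 ≤ r) :
    (r • M).PosSemidef := by
  refine Matrix.PosSemidef.of_dotProduct_mulVec_nonneg ?_ ?_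
  · have : (r • M)ᴴ = r • Mᴴ := by
      ext i j; simp [conjTranspose_apply, Complex.real_smul]
    rw [Matrix.IsHermitian, this, hM.1]
  · intro x
    have : star x ⬝ᵥ (r • M) *ᵥ x = (r : ℂ) * (star x ⬝ᵥ M *ᵥ x) := by
      rw [smul_mulVec, dotProduct_smul, Complex.real_smul]
    rw [this]
    exact mul_nonneg (Complex.zero_le_real.mpr hr) (hM.dotProduct_mulVec_nonneg x)

/-- If `c` is below all eigenvalues of Hermitian `B`, then `B - c • 1` is PSD. -/
lemma sub_smul_one_psd {B : Matrix (Fin n) (Fin n) ℂ} (hB : B.IsHermitian) {c : ℝ}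
    (hc : ∀ i, c ≤ hB.eigenvalues i) : (B - c • 1).PosSemidef := by
  have hU := hB.spectral_theorem
  simp only [Unitary.conjStarAlgAut_apply, Unitary.coe_star] at hU
  set U : Matrix (Fin n) (Fin n) ℂ := (hB.eigenvectorUnitary : Matrix (Fin n) (Fin n) ℂ)
  have hUU : U * star U = 1 := Matrix.mem_unitaryGroup_iff.mp hB.eigenvectorUnitary.2
  have key : B - c • 1 = U * (Matrix.diagonal fun i => ((hB.eigenvalues i - c : ℝ) : ℂ)) * star U := by
    have h1 : (c : ℝ) • (1 : Matrix (Fin n) (Fin n) ℂ) = U * ((c : ℝ) • 1) * star U := by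
      rw [Matrix.mul_smul, Matrix.smul_mul, Matrix.mul_one, hUU]
    calc B - c • 1
        = U * Matrix.diagonal (RCLike.ofReal ∘ hB.eigenvalues) * star U - U * ((c : ℝ) • 1) * star U := by
          rw [← hU, ← h1]
      _ = U * (Matrix.diagonal (RCLike.ofReal ∘ hB.eigenvalues) - (c : ℝ) • 1) * star U := by
          rw [Matrix.mul_sub, Matrix.sub_mul]
      _ = U * (Matrix.diagonal fun i => ((hB.eigenvalues i - c : ℝ) : ℂ)) * star U := by
          congr 2
          ext i j
          by_cases h : i = j <;>
            simp [h, Matrix.diagonal_apply, Matrix.one_apply, Complex.real_smul,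
              Complex.ofReal_sub, sub_eq_iff_eq_add]
  rw [key, Matrix.star_eq_conjTranspose]
  exact PosSemidef.mul_mul_conjTranspose_same
    (Matrix.posSemidef_diagonal_iff.mpr fun i => by
      exact_mod_cast Complex.zero_le_real.mpr (sub_nonneg.mpr (hc i))) U

/-- If `c` is above all eigenvalues of Hermitian `B`, then `c • 1 - B` is PSD. -/
lemma smul_one_sub_psd {B : Matrix (Fin n) (Fin n) ℂ} (hB : B.IsHermitian) {c : ℝ}
    (hc : ∀ i, hB.eigenvalues i ≤ c) : ((c : ℝ) • 1 - B).PosSemidef := by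
  have hU := hB.spectral_theorem
  simp only [Unitary.conjStarAlgAut_apply, Unitary.coe_star] at hU
  set U : Matrix (Fin n) (Fin n) ℂ := (hB.eigenvectorUnitary : Matrix (Fin n) (Fin n) ℂ)
  have hUU : U * star U = 1 := Matrix.mem_unitaryGroup_iff.mp hB.eigenvectorUnitary.2
  have key : (c : ℝ) • 1 - B = U * (Matrix.diagonal fun i => ((c - hB.eigenvalues i : ℝ) : ℂ)) * star U := by
    have h1 : (c : ℝ) • (1 : Matrix (Fin n) (Fin n) ℂ) = U * ((c : ℝ) • 1) * star U := by
      rw [Matrix.mul_smul, Matrix.smul_mul, Matrix.mul_one, hUU]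
    calc (c : ℝ) • (1 : Matrix (Fin n) (Fin n) ℂ) - B
        = U * ((c : ℝ) • 1) * star U - U * Matrix.diagonal (RCLike.ofReal ∘ hB.eigenvalues) * star U := by
          rw [← hU, ← h1]
      _ = U * ((c : ℝ) • 1 - Matrix.diagonal (RCLike.ofReal ∘ hB.eigenvalues)) * star U := by
          rw [Matrix.mul_sub, Matrix.sub_mul]
      _ = U * (Matrix.diagonal fun i => ((c - hB.eigenvalues i : ℝ) : ℂ)) * star U := by
          congr 2
          ext i j
          by_cases h : i = j <;>
            simp [h, Matrix.diagonal_apply, Matrix.one_apply, Complex.real_smul,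
              Complex.ofReal_sub, sub_eq_iff_eq_add]
  rw [key, Matrix.star_eq_conjTranspose]
  exact PosSemidef.mul_mul_conjTranspose_same
    (Matrix.posSemidef_diagonal_iff.mpr fun i => by
      exact_mod_cast Complex.zero_le_real.mpr (sub_nonneg.mpr (hc i))) U

/-- The determinant of a PSD matrix is a nonneg real. -/
lemma det_psd_real {M : Matrix (Fin n) (Fin n) ℂ} (hM : M.PosSemidef) :
    ∃ r : ℝ, 0 ≤ r ∧ M.det = (r : ℂ) := by
  refine ⟨∏ i, hM.1.eigenvalues i, Finset.prod_nonneg fun i _ => hM.eigenvalues_nonneg i, ?_⟩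
  rw [hM.1.det_eq_prod_eigenvalues]
  push_cast
  rfl

open scoped MatrixOrder in
lemma exists_psd_sqrt {A : Matrix (Fin n) (Fin n) ℂ} (hA : A.PosSemidef) :
    ∃ C : Matrix (Fin n) (Fin n) ℂ, C.PosSemidef ∧ C * C = A :=
  ⟨CFC.sqrt A, (CFC.sqrt_nonneg A).posSemidef, CFC.sqrt_mul_sqrt_self A hA.nonneg⟩

/-- `1 ≤ Re det (1 + R)` for PSD `R`. -/
lemma one_le_det_one_add {R : Matrix (Fin n) (Fin n) ℂ} (hR : R.PosSemidef) :
    1 ≤ ((1 + R).det).re := by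
  set U : Matrix (Fin n) (Fin n) ℂ := (hR.1.eigenvectorUnitary : Matrix (Fin n) (Fin n) ℂ)
  have hUU : U * star U = 1 := Matrix.mem_unitaryGroup_iff.mp hR.1.eigenvectorUnitary.2
  have key : 1 + R = U * (1 + Matrix.diagonal (RCLike.ofReal ∘ hR.1.eigenvalues)) * star U := by
    rw [Matrix.mul_add, Matrix.add_mul, Matrix.mul_one, hUU]
    exact congrArg _ hR.1.spectral_theorem
  have hdet : (1 + R).det = ((∏ i, (1 + hR.1.eigenvalues i) : ℝ) : ℂ) := by
    rw [key, Matrix.det_mul_right_comm, hUU, Matrix.one_mul]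
    have : (1 : Matrix (Fin n) (Fin n) ℂ) + Matrix.diagonal (RCLike.ofReal ∘ hR.1.eigenvalues)
        = Matrix.diagonal fun i => ((1 + hR.1.eigenvalues i : ℝ) : ℂ) := by
      rw [← Matrix.diagonal_one, Matrix.diagonal_add]
      ext i
      push_cast
      rfl
    rw [this, Matrix.det_diagonal]
    push_cast
    rfl
  rw [hdet, Complex.ofReal_re]
  calc (1 : ℝ) = ∏ _i : Fin n, (1 : ℝ) := by simp
    _ ≤ ∏ i, (1 + hR.1.eigenvalues i) :=
      Finset.prod_le_prod (fun i _ => zero_le_one) fun i _ => by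
        linarith [hR.eigenvalues_nonneg i]

/-- Monotonicity of `Re det (1 + ·)` on the Loewner order for PSD matrices. -/
lemma det_one_add_mono {M N : Matrix (Fin n) (Fin n) ℂ} (hM : M.PosSemidef)
    (hNM : (N - M).PosSemidef) : ((1 + M).det).re ≤ ((1 + N).det).re := by
  have hP : (1 + M).PosDef := Matrix.PosDef.add_posSemidef Matrix.PosDef.one hM
  obtain ⟨Q, hQ, hQQ⟩ : ∃ Q : Matrix (Fin n) (Fin n) ℂ, Q.PosSemidef ∧ Q * Q = 1 + M :=
    exists_psd_sqrt hP.posSemidef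
  have hdetQ : IsUnit Q.det := by
    have : Q.det * Q.det = (1 + M).det := by rw [← Matrix.det_mul, hQQ]
    have hne : Q.det ≠ 0 := by
      intro h
      rw [h, zero_mul] at this
      exact hP.det_pos.ne' this.symm
    exact hne.isUnit
  have hQU : IsUnit Q := (Matrix.isUnit_iff_isUnit_det Q).mpr hdetQ
  have hQinv : Q * Q⁻¹ = 1 := Matrix.mul_nonsing_inv Q hdetQ
  have hQinv' : Q⁻¹ * Q = 1 := Matrix.nonsing_inv_mul Q hdetQ
  have hS : (Q⁻¹ * (N - M) * Q⁻¹).PosSemidef := by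
    have hQinvH : (Q⁻¹)ᴴ = Q⁻¹ := hQ.1.inv
    have h := PosSemidef.mul_mul_conjTranspose_same hNM Q⁻¹
    rwa [hQinvH] at h
  set S : Matrix (Fin n) (Fin n) ℂ := Q⁻¹ * (N - M) * Q⁻¹ with hSdef
  have key : 1 + N = Q * (1 + S) * Q := by
    rw [Matrix.mul_add, Matrix.add_mul, Matrix.mul_one, hQQ, hSdef]
    have : Q * (Q⁻¹ * (N - M) * Q⁻¹) * Q = N - M := by
      rw [← Matrix.mul_assoc, ← Matrix.mul_assoc, hQinv, Matrix.one_mul, Matrix.mul_assoc,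
        hQinv', Matrix.mul_one]
    rw [this]
    abel
  obtain ⟨q, hq0, hq⟩ := det_psd_real hQ
  have hdet1M : ((1 + M).det) = ((q * q : ℝ) : ℂ) := by
    rw [← hQQ, Matrix.det_mul, hq]; push_cast; ring
  have hdet1N : ((1 + N).det).re = (q * q) * ((1 + S).det).re := by
    rw [key, Matrix.det_mul, Matrix.det_mul, hq]
    have : (q : ℂ) * (1 + S).det * q = ((q * q : ℝ) : ℂ) * (1 + S).det := by push_cast; ring
    rw [this]
    rw [Complex.re_ofReal_mul]
  rw [hdet1M, hdet1N, Complex.ofReal_re]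
  nlinarith [one_le_det_one_add hS, mul_nonneg hq0 hq0]

end Stmt6Aux

/-- Amir-Moez style determinant bounds: for `A` Hermitian PSD and `B` Hermitian PD,
`det(I + ρ λ_min(B) A) ≤ det(I + ρ A B) ≤ det(I + ρ λ_max(B) A)`. -/
theorem stmt_6 (n : ℕ) (hn : 0 < n) (A B : Matrix (Fin n) (Fin n) ℂ)
    (hA : A.PosSemidef) (hB : B.PosDef) (ρ : ℝ) (hρ : 0 < ρ) :
    ((1 + (ρ * ⨅ i, hB.1.eigenvalues i) • A).det).re ≤ ((1 + ρ • (A * B)).det).re ∧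
    ((1 + ρ • (A * B)).det).re ≤ ((1 + (ρ * ⨆ i, hB.1.eigenvalues i) • A).det).re := by
  have : Nonempty (Fin n) := ⟨⟨0, hn⟩⟩
  set cmin := ⨅ i, hB.1.eigenvalues i with hcmin
  set cmax := ⨆ i, hB.1.eigenvalues i with hcmax
  have hcminle : ∀ i, cmin ≤ hB.1.eigenvalues i := fun i =>
    ciInf_le (Finite.bddBelow_range _) i
  have hcmaxle : ∀ i, hB.1.eigenvalues i ≤ cmax := fun i =>
    le_ciSup (Finite.bddAbove_range _) i
  have hcmin0 : 0 ≤ cmin := le_ciInf fun i => (hB.eigenvalues_pos i).le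
  have hcmax0 : 0 ≤ cmax := le_trans (hB.eigenvalues_pos ⟨0, hn⟩).le (hcmaxle ⟨0, hn⟩)
  obtain ⟨C, hC, hCC⟩ : ∃ C : Matrix (Fin n) (Fin n) ℂ, C.PosSemidef ∧ C * C = A :=
    Stmt6Aux.exists_psd_sqrt hA
  have hCH : Cᴴ = C := hC.1
  -- Middle matrix
  set M2 : Matrix (Fin n) (Fin n) ℂ := ρ • (C * B * C) with hM2def
  have hM2 : M2.PosSemidef := by
    refine Stmt6Aux.smul_psd ?_ hρ.le
    have h := Matrix.PosSemidef.mul_mul_conjTranspose_same hB.posSemidef C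
    rwa [hCH] at h
  -- det (1 + ρ • (A * B)) = det (1 + M2)
  have hmid : (1 + ρ • (A * B)).det = (1 + M2).det := by
    have h1 : (1 : Matrix (Fin n) (Fin n) ℂ) + ρ • (A * B) = 1 + C * (ρ • (C * B)) := by
      rw [Matrix.mul_smul, ← Matrix.mul_assoc, hCC]
    have h2 : (1 : Matrix (Fin n) (Fin n) ℂ) + (ρ • (C * B)) * C = 1 + M2 := by
      rw [hM2def, Matrix.smul_mul, Matrix.mul_assoc]
    rw [h1, ← h2, Matrix.det_one_add_mul_comm]
  -- Loewner comparisons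
  have hsub1 : (M2 - (ρ * cmin) • A).PosSemidef := by
    have hX : (B - cmin • 1).PosSemidef := Stmt6Aux.sub_smul_one_psd hB.1 hcminle
    have hXC : (C * (B - cmin • 1) * C).PosSemidef := by
      have h := Matrix.PosSemidef.mul_mul_conjTranspose_same hX C
      rwa [hCH] at h
    have heq : M2 - (ρ * cmin) • A = ρ • (C * (B - cmin • 1) * C) := by
      rw [hM2def, ← hCC, Matrix.mul_sub, Matrix.sub_mul, smul_sub]
      congr 1
      rw [Matrix.mul_smul, Matrix.smul_mul, Matrix.mul_one, smul_smul]
    rw [heq]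
    exact Stmt6Aux.smul_psd hXC hρ.le
  have hsub2 : ((ρ * cmax) • A - M2).PosSemidef := by
    have hX : ((cmax : ℝ) • 1 - B).PosSemidef := Stmt6Aux.smul_one_sub_psd hB.1 hcmaxle
    have hXC : (C * ((cmax : ℝ) • 1 - B) * C).PosSemidef := by
      have h := Matrix.PosSemidef.mul_mul_conjTranspose_same hX C
      rwa [hCH] at h
    have heq : (ρ * cmax) • A - M2 = ρ • (C * ((cmax : ℝ) • 1 - B) * C) := by
      rw [hM2def, ← hCC, Matrix.mul_sub, Matrix.sub_mul, smul_sub]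
      congr 1
      rw [Matrix.mul_smul, Matrix.smul_mul, Matrix.mul_one, smul_smul]
    rw [heq]
    exact Stmt6Aux.smul_psd hXC hρ.le
  have hM1 : ((ρ * cmin) • A).PosSemidef :=
    Stmt6Aux.smul_psd hA (mul_nonneg hρ.le hcmin0)
  constructor
  · rw [hmid]
    exact Stmt6Aux.det_one_add_mono hM1 hsub1
  · rw [hmid]
    exact Stmt6Aux.det_one_add_mono hM2 hsub2
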